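/- The toric equivalence classes of acyclic orientations of the complete graph K_n, where two orientations are equivalent if one is obtained from the other by a sequence of source-to-sink conversions, number exactly (n-1)!. -/

import Mathlib

/-- An acyclic orientation of the complete graph `K_n` on the vertex set `Fin n`. -/
def IsAcycOrientK (n : ℕ) (ω : Fin n → Fin n → Prop) : Prop :=
  (∀ u v : Fin n, u ≠ v → (ω u v ↔ ¬ ω v u)) ∧
    (∀ v : Fin n, ¬ ω v v) ∧
    (∀ v : Fin n, ¬ Relation.TransGen ω v v)

/-- `ω'` is obtained from `ω` by converting a source `s` (a vertex with no incoming
edges) into a sink, i.e. by reversing all edges incident to `s`. -/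
def SourceToSinkStep (n : ℕ) (ω ω' : {ω : Fin n → Fin n → Prop // IsAcycOrientK n ω}) :
    Prop :=
  ∃ s : Fin n, (∀ v, ¬ ω.1 v s) ∧
    ∀ u v, ω'.1 u v ↔ ((u = s ∨ v = s) ∧ ω.1 v u) ∨ (u ≠ s ∧ v ≠ s ∧ ω.1 u v)

namespace StmtAux

open Finset Equiv

variable {m : ℕ}

/-- the orientation associated to a permutation -/
def po (σ : Equiv.Perm (Fin (m+1))) : Fin (m+1) → Fin (m+1) → Prop :=
  fun u v => σ u < σ v

lemma po_acyc (σ : Equiv.Perm (Fin (m+1))) : IsAcycOrientK (m+1) (po σ) := by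
  refine ⟨fun u v huv => ?_, fun v => lt_irrefl _, fun v => ?_⟩
  · constructor
    · exact fun h h' => absurd (h.trans h') (lt_irrefl _)
    · intro h
      exact lt_of_le_of_ne (not_lt.mp h) (fun he => huv (σ.injective he))
  · have ht : Transitive (po (m := m) σ) := fun a b c h h' => h.trans h'
    rw [@Relation.transGen_eq_self _ _ ⟨ht⟩]
    exact lt_irrefl _

/-- transitivity of an acyclic orientation -/
lemma acyc_trans {ω : Fin (m+1) → Fin (m+1) → Prop} (h : IsAcycOrientK (m+1) ω)
    {u v w : Fin (m+1)} (h1 : ω u v) (h2 : ω v w) : ω u w := by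
  obtain ⟨htot, hirr, hacyc⟩ := h
  have huw : u ≠ w := by
    rintro rfl
    exact hacyc u ((Relation.TransGen.single h1).tail h2)
  by_contra hc
  have hwu : ω w u := by
    by_contra hwu
    exact hc ((htot u w huw).mpr hwu)
  exact hacyc u (((Relation.TransGen.single h1).tail h2).tail hwu)


open Classical in
/-- rank of a vertex: number of incoming vertices -/
noncomputable def rk (ω : Fin (m+1) → Fin (m+1) → Prop) (hω : IsAcycOrientK (m+1) ω)
    (x : Fin (m+1)) : Fin (m+1) :=
  ⟨(Finset.univ.filter (fun y => ω y x)).card, by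
    have hsub : (Finset.univ.filter (fun y => ω y x)) ⊆ Finset.univ.erase x := by
      intro z hz
      rw [Finset.mem_filter] at hz
      refine Finset.mem_erase.mpr ⟨fun hzx => ?_, Finset.mem_univ z⟩
      · exact hω.2.1 x (hzx ▸ hz.2)
    calc (Finset.univ.filter (fun y => ω y x)).card
        ≤ (Finset.univ.erase x).card := Finset.card_le_card hsub
      _ = m + 1 - 1 := by rw [Finset.card_erase_of_mem (Finset.mem_univ x), Finset.card_univ,
            Fintype.card_fin]
      _ < m + 1 := by omega⟩

open Classical in
lemma rk_lt {ω : Fin (m+1) → Fin (m+1) → Prop} (hω : IsAcycOrientK (m+1) ω)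
    {x y : Fin (m+1)} (h : ω x y) : rk ω hω x < rk ω hω y := by
  have hxy : x ≠ y := fun he => hω.2.1 y (he ▸ h)
  have hsub : insert x (Finset.univ.filter (fun z => ω z x)) ⊆
      Finset.univ.filter (fun z => ω z y) := by
    intro z hz
    rw [Finset.mem_insert, Finset.mem_filter] at hz
    rw [Finset.mem_filter]
    refine ⟨Finset.mem_univ z, ?_⟩
    rcases hz with rfl | hz
    · exact h
    · exact acyc_trans hω hz.2 h
  have hx : x ∉ Finset.univ.filter (fun z => ω z x) := by
    rw [Finset.mem_filter]
    exact fun hh => hω.2.1 x hh.2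
  have := Finset.card_le_card hsub
  rw [Finset.card_insert_of_notMem hx] at this
  simp only [rk, Fin.mk_lt_mk, Fin.lt_def]
  convert Nat.lt_of_lt_of_le (Nat.lt_succ_self _) this

lemma rk_iff {ω : Fin (m+1) → Fin (m+1) → Prop} (hω : IsAcycOrientK (m+1) ω)
    (x y : Fin (m+1)) : ω x y ↔ rk ω hω x < rk ω hω y := by
  constructor
  · exact rk_lt hω
  · intro h
    by_contra hc
    rcases eq_or_ne x y with rfl | hxy
    · exact lt_irrefl _ h
    · have : ω y x := by
        by_contra hyx
        exact hc ((hω.1 x y hxy).mpr hyx)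
      exact absurd h (not_lt.mpr (rk_lt hω this).le)

lemma rk_bij {ω : Fin (m+1) → Fin (m+1) → Prop} (hω : IsAcycOrientK (m+1) ω) :
    Function.Bijective (rk ω hω) := by
  rw [Fintype.bijective_iff_injective_and_card]
  refine ⟨fun x y hxy => ?_, rfl⟩
  by_contra hne
  by_cases h : ω x y
  · exact absurd hxy (ne_of_lt (rk_lt hω h))
  · have hyx : ω y x := (hω.1 y x (Ne.symm hne)).mpr h
    exact absurd hxy (ne_of_lt (rk_lt hω hyx)).symm


/-- the permutation associated to an acyclic orientation -/
noncomputable def rkPerm (ω : {ω : Fin (m+1) → Fin (m+1) → Prop // IsAcycOrientK (m+1) ω}) :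
    Equiv.Perm (Fin (m+1)) :=
  Equiv.ofBijective (rk ω.1 ω.2) (rk_bij ω.2)

lemma rkPerm_apply (ω : {ω : Fin (m+1) → Fin (m+1) → Prop // IsAcycOrientK (m+1) ω})
    (x : Fin (m+1)) : rkPerm ω x = rk ω.1 ω.2 x := rfl

lemma po_rkPerm (ω : {ω : Fin (m+1) → Fin (m+1) → Prop // IsAcycOrientK (m+1) ω}) :
    ω.1 = po (rkPerm ω) := by
  funext u v
  exact propext (rk_iff ω.2 u v)

open Classical in
lemma rk_po (σ : Equiv.Perm (Fin (m+1))) (x : Fin (m+1)) :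
    rk (po σ) (po_acyc σ) x = σ x := by
  apply Fin.ext
  simp only [rk]
  have he : Finset.univ.filter (fun y => po σ y x) =
      (Finset.Iio (σ x)).map σ.symm.toEmbedding := by
    ext y
    simp only [Finset.mem_filter, Finset.mem_univ, true_and, Finset.mem_map,
      Finset.mem_Iio, Equiv.coe_toEmbedding]
    constructor
    · exact fun h => ⟨σ y, h, σ.symm_apply_apply y⟩
    · rintro ⟨z, hz, rfl⟩
      show σ _ < σ x
      rwa [σ.apply_symm_apply]
  rw [he, Finset.card_map, Fin.card_Iio]


lemma vs1 (a : Fin (m+1)) : (a - 1).val = if a.val = 0 then m else a.val - 1 := by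
  rw [Fin.coe_sub_one]
  rcases eq_or_ne a 0 with rfl | h
  · simp
  · rw [if_neg h, if_neg (show ¬ (a.val = 0) from fun h' => h (Fin.ext (h'.trans (Fin.val_zero _).symm)))]

/-- the shifted permutation: everybody moves down one, the old minimum becomes max -/
def shf (σ : Equiv.Perm (Fin (m+1))) : Equiv.Perm (Fin (m+1)) :=
  σ.trans (Equiv.subRight 1)

lemma step_formula (σ : Equiv.Perm (Fin (m+1))) (u v : Fin (m+1)) :
    po (shf σ) u v ↔
      ((u = σ.symm 0 ∨ v = σ.symm 0) ∧ po σ v u) ∨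
        (u ≠ σ.symm 0 ∧ v ≠ σ.symm 0 ∧ po σ u v) := by
  have hu : (u = σ.symm 0) ↔ (σ u).val = 0 := by
    rw [Equiv.eq_symm_apply, Fin.ext_iff, Fin.val_zero]
  have hv : (v = σ.symm 0) ↔ (σ v).val = 0 := by
    rw [Equiv.eq_symm_apply, Fin.ext_iff, Fin.val_zero]
  have h1 := vs1 (σ u)
  have h2 := vs1 (σ v)
  have h3 := (σ u).isLt
  have h4 := (σ v).isLt
  simp only [po, shf, Equiv.trans_apply, Equiv.subRight_apply, Fin.lt_def, hu, hv]
  split_ifs at h1 h2 <;> omega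

lemma step_source (σ : Equiv.Perm (Fin (m+1))) (v : Fin (m+1)) : ¬ po σ v (σ.symm 0) := by
  simp only [po, Equiv.apply_symm_apply]
  exact Fin.not_lt_zero _

lemma step_shf (σ : Equiv.Perm (Fin (m+1))) :
    SourceToSinkStep (m+1) ⟨po σ, po_acyc σ⟩ ⟨po (shf σ), po_acyc _⟩ :=
  ⟨σ.symm 0, step_source σ, step_formula σ⟩

lemma step_eq (σ : Equiv.Perm (Fin (m+1)))
    (ω' : {ω : Fin (m+1) → Fin (m+1) → Prop // IsAcycOrientK (m+1) ω})
    (h : SourceToSinkStep (m+1) ⟨po σ, po_acyc σ⟩ ω') :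
    ω' = ⟨po (shf σ), po_acyc _⟩ := by
  obtain ⟨s, hsrc, hform⟩ := h
  have h0 : ¬ (0 : Fin (m+1)) < σ s := by
    have := hsrc (σ.symm 0)
    simpa only [po, Equiv.apply_symm_apply] using this
  have hs0 : σ s = 0 := le_antisymm (not_lt.mp h0) (Fin.zero_le _)
  have hs : s = σ.symm 0 := by rw [Equiv.eq_symm_apply]; exact hs0
  subst hs
  refine Subtype.ext ?_
  funext u v
  exact propext ((hform u v).trans (step_formula σ u v).symm)

lemma rkPerm_po (σ : Equiv.Perm (Fin (m+1))) : rkPerm ⟨po σ, po_acyc σ⟩ = σ :=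
  Equiv.ext fun x => rk_po σ x

lemma step_rkPerm {ω ω' : {ω : Fin (m+1) → Fin (m+1) → Prop // IsAcycOrientK (m+1) ω}}
    (h : SourceToSinkStep (m+1) ω ω') : rkPerm ω' = shf (rkPerm ω) := by
  have hω : ω = ⟨po (rkPerm ω), po_acyc _⟩ := Subtype.ext (po_rkPerm ω)
  rw [hω] at h
  rw [step_eq _ _ h, rkPerm_po]

/-- normalization: shift so that vertex 0 gets rank 0 in the canonical representative -/
def nrm (σ : Equiv.Perm (Fin (m+1))) : Equiv.Perm (Fin (m+1)) :=
  σ.trans (Equiv.subRight (σ 0))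

lemma nrm_apply (σ : Equiv.Perm (Fin (m+1))) (x : Fin (m+1)) : nrm σ x = σ x - σ 0 := rfl

lemma nrm_zero (σ : Equiv.Perm (Fin (m+1))) : nrm σ 0 = 0 := sub_self _

lemma nrm_shf (σ : Equiv.Perm (Fin (m+1))) : nrm (shf σ) = nrm σ := by
  refine Equiv.ext fun x => ?_
  simp only [nrm_apply, shf, Equiv.trans_apply, Equiv.subRight_apply]
  exact sub_sub_sub_cancel_right _ _ _

open Fin.NatCast in
lemma quot_subRight (σ : Equiv.Perm (Fin (m+1))) (k : ℕ) :
    Quot.mk (SourceToSinkStep (m+1)) ⟨po σ, po_acyc σ⟩ =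
      Quot.mk _ ⟨po (σ.trans (Equiv.subRight (k : Fin (m+1)))), po_acyc _⟩ := by
  induction k with
  | zero =>
    have : σ.trans (Equiv.subRight ((0 : ℕ) : Fin (m+1))) = σ :=
      Equiv.ext fun x => by simp
    rw [this]
  | succ k ih =>
    have : σ.trans (Equiv.subRight ((k + 1 : ℕ) : Fin (m+1))) =
        shf (σ.trans (Equiv.subRight (k : Fin (m+1)))) := by
      refine Equiv.ext fun x => ?_
      simp only [shf, Equiv.trans_apply, Equiv.subRight_apply, sub_sub]
      push_cast
      ring_nf
    rw [this, ih]
    exact Quot.sound (step_shf _)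


noncomputable def F : Quot (SourceToSinkStep (m+1)) → {τ : Equiv.Perm (Fin (m+1)) // τ 0 = 0} :=
  Quot.lift (fun ω => ⟨nrm (rkPerm ω), nrm_zero _⟩)
    (fun a b h => by
      refine Subtype.ext ?_
      show nrm (rkPerm a) = nrm (rkPerm b)
      rw [step_rkPerm h, nrm_shf])

def G : {τ : Equiv.Perm (Fin (m+1)) // τ 0 = 0} → Quot (SourceToSinkStep (m+1)) :=
  fun τ => Quot.mk _ ⟨po τ.1, po_acyc _⟩

lemma FG (τ : {τ : Equiv.Perm (Fin (m+1)) // τ 0 = 0}) : F (G τ) = τ := by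
  refine Subtype.ext ?_
  show nrm (rkPerm ⟨po τ.1, po_acyc _⟩) = τ.1
  rw [rkPerm_po]
  refine Equiv.ext fun x => ?_
  rw [nrm_apply, τ.prop, sub_zero]

open Fin.NatCast in
lemma GF (q : Quot (SourceToSinkStep (m+1))) : G (F q) = q := by
  induction q using Quot.ind with
  | mk ω =>
    show Quot.mk _ ⟨po (nrm (rkPerm ω)), po_acyc _⟩ = Quot.mk _ ω
    have h1 : Quot.mk (SourceToSinkStep (m+1)) ω =
        Quot.mk _ ⟨po (rkPerm ω), po_acyc _⟩ :=
      congrArg _ (Subtype.ext (po_rkPerm ω))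
    rw [h1]
    have h2 := quot_subRight (rkPerm ω) ((rkPerm ω 0).val)
    rw [Fin.cast_val_eq_self] at h2
    exact h2.symm

noncomputable def quotEquiv : Quot (SourceToSinkStep (m+1)) ≃
    {τ : Equiv.Perm (Fin (m+1)) // τ 0 = 0} :=
  ⟨F, G, GF, FG⟩

def prodEquiv : {p : Fin (m+1) × Equiv.Perm (Fin m) // p.1 = 0} ≃ Equiv.Perm (Fin m) where
  toFun := fun p => p.1.2
  invFun := fun e => ⟨(0, e), rfl⟩
  left_inv := fun p => Subtype.ext (Prod.ext p.prop.symm rfl)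
  right_inv := fun _ => rfl

def fixEquiv : {τ : Equiv.Perm (Fin (m+1)) // τ 0 = 0} ≃ Equiv.Perm (Fin m) := by
  refine (Equiv.subtypeEquiv Equiv.Perm.decomposeFin (fun τ => ?_)).trans prodEquiv
  have h : τ 0 = (Equiv.Perm.decomposeFin τ).1 := by
    conv_lhs => rw [← Equiv.Perm.decomposeFin.symm_apply_apply τ]
    exact Equiv.Perm.decomposeFin_symm_apply_zero _ _
  rw [h]

end StmtAux

theorem stmt_8 (n : ℕ) (hn : 1 ≤ n) :
    Nat.card (Quot (SourceToSinkStep n)) = (n - 1).factorial := by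
  obtain ⟨m, rfl⟩ : ∃ m, n = m + 1 := ⟨n - 1, by omega⟩
  rw [Nat.card_congr (StmtAux.quotEquiv.trans StmtAux.fixEquiv),
    Nat.card_eq_fintype_card, Fintype.card_perm, Fintype.card_fin]
  simp
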